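/- arXiv:1311.3571 — 2 statements merged into one kernel-verified Lean document; each statement's English description precedes it below -/
import Mathlib

section
/- Let h be a positive integer, m + 1 = 100·h, and write (x_0X)^m = Σ_{j=0}^m a_jX^j with a_j ∈ A(100·h − 1). Then there exists an index i > (3/4)(m+1) such that a_i ∉ B_1 while a_j ∈ B_1 for all j with i < j ≤ m. -/
noncomputable section

/-- `A¹`: the free unital associative algebra over `K` on generators `x_0, x_1, x_2, …`,
realized as the monoid algebra of the free monoid on `ℕ`.  The free *non-unital*
algebra `A` sits inside it as the span of the monomials of positive length. -/
abbrev FA (K : Type) [Field K] : Type := MonoidAlgebra K (FreeMonoid ℕ)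

/-- The monomial `x_{i₁} x_{i₂} ⋯ x_{iₙ}` corresponding to the list `[i₁, …, iₙ]`. -/
def mon (K : Type) [Field K] (l : List ℕ) : FA K :=
  MonoidAlgebra.single (FreeMonoid.ofList l) 1

/-- The generator `x_i`. -/
def xg (K : Type) [Field K] (i : ℕ) : FA K := mon K [i]

/-- `A(n)`: the `K`-linear span of the monomials of length `n`. -/
def Agr (K : Type) [Field K] (n : ℕ) : Submodule K (FA K) :=
  Submodule.span K {a | ∃ l : List ℕ, l.length = n ∧ a = mon K l}

/-- The free non-unital algebra `A`: the span of monomials of positive length. -/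
def Apos (K : Type) [Field K] : Submodule K (FA K) :=
  Submodule.span K {a | ∃ l : List ℕ, l ≠ [] ∧ a = mon K l}

/-- `D` is the `K`-derivation with `D(x_i) = x_{i+1}` for every `i`. -/
def IsDer (K : Type) [Field K] (D : FA K →ₗ[K] FA K) : Prop :=
  (∀ a b : FA K, D (a * b) = D a * b + a * D b) ∧ ∀ i : ℕ, D (xg K i) = xg K (i + 1)

/-- `W(k, n, t)`:  `W(k,n,0)` is the set of monomials of length `n` in the letters
`x_0, …, x_{k-1}`, and `W(k,n,t+1) = D(W(k,n,t))`. -/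
def WsetL (K : Type) [Field K] (D : FA K →ₗ[K] FA K) (k n : ℕ) : ℕ → Set (FA K)
  | 0 => {a | ∃ l : List ℕ, l.length = n ∧ (∀ i ∈ l, i < k) ∧ a = mon K l}
  | t + 1 => D '' WsetL K D k n t

/-- `W(k, n) = ⋃ₜ W(k, n, t)`. -/
def Wset (K : Type) [Field K] (D : FA K →ₗ[K] FA K) (k n : ℕ) : Set (FA K) :=
  ⋃ t, WsetL K D k n t

/-- `I_k`: the two-sided ideal of `A` generated by `W(k, 2·100^{k²})`. -/
def Ik (K : Type) [Field K] (D : FA K →ₗ[K] FA K) (k : ℕ) : Submodule K (FA K) :=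
  Submodule.span K
    {a | ∃ u v w : FA K, w ∈ Wset K D k (2 * 100 ^ (k ^ 2)) ∧ a = u * w * v}

/-- `I = Σ_{k > 0} I_k`. -/
def Itot (K : Type) [Field K] (D : FA K →ₗ[K] FA K) : Submodule K (FA K) :=
  ⨆ k : ℕ, ⨆ _ : 1 ≤ k, Ik K D k

/-- `W_k = Σ_{m ≥ 0} A(m·100^{k²}) · W(k, 100^{k²}) · A¹`. -/
def Wk (K : Type) [Field K] (D : FA K →ₗ[K] FA K) (k : ℕ) : Submodule K (FA K) :=
  Submodule.span K {a | ∃ (l : List ℕ) (w v : FA K),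
    (∃ m : ℕ, l.length = m * 100 ^ (k ^ 2)) ∧ w ∈ Wset K D k (100 ^ (k ^ 2)) ∧
    a = mon K l * w * v}

/-- The set `Z_k`.  Here the letter of a monomial `s` in (1-indexed) position
`j` is `l[j-1]?` for the corresponding list `l`. -/
def Zset (K : Type) [Field K] (k : ℕ) : Set (FA K) :=
  {a | (∃ (κ : K) (l : List ℕ) (p q : ℕ), p < q ∧ q ≤ k ∧
          l.length = 100 ^ (k ^ 2) - 1 ∧
          l[3 ^ p * 100 ^ ((k - 1) ^ 2) - 1]? = l[3 ^ q * 100 ^ ((k - 1) ^ 2) - 1]? ∧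
          a = κ • mon K l) ∨
      (∃ (κ : K) (l₁ l₂ : List ℕ) (p q e₁ e₂ : ℕ), p < q ∧ q ≤ k ∧ e₂ < e₁ ∧ 0 < e₂ ∧
          l₁.length = 100 ^ (k ^ 2) - 1 ∧ l₂.length = 100 ^ (k ^ 2) - 1 ∧
          l₁[3 ^ p * 100 ^ ((k - 1) ^ 2) - 1]? = some e₁ ∧
          l₁[3 ^ q * 100 ^ ((k - 1) ^ 2) - 1]? = some e₂ ∧
          l₂[3 ^ p * 100 ^ ((k - 1) ^ 2) - 1]? = some e₂ ∧
          l₂[3 ^ q * 100 ^ ((k - 1) ^ 2) - 1]? = some e₁ ∧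
          (∀ j : ℕ, j + 1 ≠ 3 ^ p * 100 ^ ((k - 1) ^ 2) →
            j + 1 ≠ 3 ^ q * 100 ^ ((k - 1) ^ 2) → l₁[j]? = l₂[j]?) ∧
          a = κ • (mon K l₁ + mon K l₂))}

/-- `B_k = Σ_{m ≥ 0} A(m·100^{k²}) · Z_k · A¹`. -/
def Bk (K : Type) [Field K] (k : ℕ) : Submodule K (FA K) :=
  Submodule.span K {a | ∃ (l : List ℕ) (z v : FA K),
    (∃ m : ℕ, l.length = m * 100 ^ (k ^ 2)) ∧ z ∈ Zset K k ∧ a = mon K l * z * v}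

/-- `B_1 + B_2 + ⋯ + B_k`. -/
def Bsum (K : Type) [Field K] (k : ℕ) : Submodule K (FA K) :=
  ∑ i ∈ Finset.Icc 1 k, Bk K i

/-- The coefficients `a_j^{(m)}` of `(x_0 X)^m = Σ_j a_j^{(m)} X^j` in `A¹[X; D]`:
`a_0^{(0)} = 1`, `a_j^{(0)} = 0` for `j > 0`, and
`a_j^{(m+1)} = x_0 (a_{j-1}^{(m)} + D(a_j^{(m)}))` (with `a_{-1}^{(m)} = 0`). -/
def acoef (K : Type) [Field K] (D : FA K →ₗ[K] FA K) : ℕ → ℕ → FA K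
  | 0, 0 => 1
  | 0, _ + 1 => 0
  | m + 1, 0 => xg K 0 * D (acoef K D m 0)
  | m + 1, j + 1 => xg K 0 * (acoef K D m j + D (acoef K D m (j + 1)))



/-! ### Auxiliary material for the proof -/

section AuxLists

/-- Increment the entry at position `q`. -/
def lincr : List ℕ → ℕ → List ℕ
  | [], _ => []
  | a :: t, 0 => (a + 1) :: t
  | a :: t, q + 1 => a :: lincr t q

/-- Decrement the entry at position `q`. -/
def ldecr : List ℕ → ℕ → List ℕ
  | [], _ => []
  | a :: t, 0 => (a - 1) :: t
  | a :: t, q + 1 => a :: ldecr t q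

@[simp] lemma lincr_length : ∀ (l : List ℕ) (q : ℕ), (lincr l q).length = l.length
  | [], _ => rfl
  | _ :: _, 0 => rfl
  | _ :: t, q + 1 => by simp [lincr, lincr_length t q]

@[simp] lemma ldecr_length : ∀ (l : List ℕ) (q : ℕ), (ldecr l q).length = l.length
  | [], _ => rfl
  | _ :: _, 0 => rfl
  | _ :: t, q + 1 => by simp [ldecr, ldecr_length t q]

lemma ldecr_sum : ∀ (t : List ℕ) (q : ℕ), q < t.length → 0 < t.getD q 0 →
    (ldecr t q).sum + 1 = t.sum
  | [], q, hq, _ => by simp at hq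
  | a :: t, 0, _, h0 => by
      simp only [List.getD_cons_zero] at h0
      simp [ldecr]; omega
  | a :: t, q + 1, hq, h0 => by
      simp only [List.getD_cons_succ] at h0
      have := ldecr_sum t q (by simpa using hq) h0
      simp [ldecr]; omega

lemma lincr_eq_iff : ∀ (l t : List ℕ) (q : ℕ), l.length = t.length → q < t.length →
    (lincr l q = t ↔ 0 < t.getD q 0 ∧ ldecr t q = l)
  | [], t, q, hl, hq => by simp at hl; omega
  | a :: l, [], q, hl, hq => by simp at hq
  | a :: l, b :: t, 0, hl, hq => by
      simp only [lincr, ldecr, List.getD_cons_zero, List.cons.injEq]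
      constructor
      · rintro ⟨rfl, rfl⟩; exact ⟨by omega, by omega, rfl⟩
      · rintro ⟨hb, rfl, rfl⟩; exact ⟨by omega, rfl⟩
  | a :: l, b :: t, q + 1, hl, hq => by
      simp only [lincr, ldecr, List.getD_cons_succ, List.cons.injEq]
      have := lincr_eq_iff l t q (by simpa using hl) (by simpa using hq)
      constructor
      · rintro ⟨rfl, h2⟩; exact ⟨(this.mp h2).1, rfl, (this.mp h2).2⟩
      · rintro ⟨h0, rfl, h2⟩; exact ⟨rfl, this.mpr ⟨h0, h2⟩⟩

/-- The count of families of disjoint sets `S_q` of levels, `gcount d t`, where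
`d` is the current slack. -/
def gcount : ℕ → List ℕ → ℕ
  | _, [] => 1
  | d, e :: t => Nat.choose d e * gcount (d + 1 - e) t

lemma gcount_zero : ∀ (t : List ℕ) (d : ℕ), d + t.length < t.sum → gcount d t = 0
  | [], d, h => by simp at h
  | e :: t, d, h => by
      simp only [List.sum_cons, List.length_cons] at h
      rcases le_or_gt e d with he | he
      · have : gcount (d + 1 - e) t = 0 := gcount_zero t (d + 1 - e) (by omega)
        simp [gcount, this]
      · simp [gcount, Nat.choose_eq_zero_of_lt he]

lemma gcount_succ : ∀ (t : List ℕ) (d : ℕ),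
    gcount (d + 1) t = gcount d t +
      ∑ q ∈ Finset.range t.length, (if 0 < t.getD q 0 then gcount d (ldecr t q) else 0)
  | [], d => by simp [gcount]
  | e :: t, d => by
      rw [show (e :: t).length = t.length + 1 from rfl, Finset.sum_range_succ']
      simp only [List.getD_cons_succ, List.getD_cons_zero, ldecr]
      rcases Nat.lt_or_ge (d + 1) e with he | he
      · -- e > d + 1 : everything vanishes
        have h1 : Nat.choose (d + 1) e = 0 := Nat.choose_eq_zero_of_lt he
        have h2 : Nat.choose d e = 0 := Nat.choose_eq_zero_of_lt (by omega)
        have h3 : ∀ x, (if 0 < e then Nat.choose d (e - 1) * x else 0) = 0 := by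
          intro x
          have : Nat.choose d (e - 1) = 0 := Nat.choose_eq_zero_of_lt (by omega)
          simp [this]
        simp [gcount, h1, h2, h3]
      · -- e ≤ d + 1
        have hrec : gcount (d + 1 - e + 1) t = gcount (d + 1 - e) t +
            ∑ q ∈ Finset.range t.length,
              (if 0 < t.getD q 0 then gcount (d + 1 - e) (ldecr t q) else 0) :=
          gcount_succ t (d + 1 - e)
        have harg : d + 2 - e = d + 1 - e + 1 := by omega
        show Nat.choose (d + 1) e * gcount (d + 2 - e) t = _
        rw [harg, hrec]
        have hsum : ∑ q ∈ Finset.range t.length,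
            (if 0 < t.getD q 0 then Nat.choose d e * gcount (d + 1 - e) (ldecr t q) else 0)
            = Nat.choose d e * ∑ q ∈ Finset.range t.length,
              (if 0 < t.getD q 0 then gcount (d + 1 - e) (ldecr t q) else 0) := by
          rw [Finset.mul_sum]
          refine Finset.sum_congr rfl fun q _ => ?_
          split <;> simp
        show _ = Nat.choose d e * gcount (d + 1 - e) t +
          ((∑ q ∈ Finset.range t.length,
            (if 0 < t.getD q 0 then Nat.choose d e * gcount (d + 1 - e) (ldecr t q) else 0)) +
           (if 0 < e then Nat.choose d (e - 1) * gcount (d + 1 - (e - 1)) t else 0))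
        rw [hsum]
        rcases Nat.eq_zero_or_pos e with rfl | hepos
        · simp [Nat.mul_add]
        · have hpascal : Nat.choose (d + 1) e = Nat.choose d (e - 1) + Nat.choose d e := by
            obtain ⟨e', rfl⟩ : ∃ e', e = e' + 1 := ⟨e - 1, by omega⟩
            simpa [Nat.add_comm] using Nat.choose_succ_succ d e'
          have harg2 : d + 1 - (e - 1) = d + 1 - e + 1 := by omega
          rw [if_pos hepos, harg2, hrec, hpascal]
          ring

end AuxLists
section AuxAlg

variable {K : Type} [Field K]

lemma ofList_eq_iff {u v : List ℕ} : FreeMonoid.ofList u = FreeMonoid.ofList v ↔ u = v :=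
  FreeMonoid.ofList.apply_eq_iff_eq

lemma mon_mul_mon (l w : List ℕ) : mon K l * mon K w = mon K (l ++ w) := by
  unfold mon
  rw [MonoidAlgebra.single_mul_single, one_mul]
  rfl

lemma mon_mul_apply (t : List ℕ) (f : FA K) (s : List ℕ) :
    (mon K t * f).coeff (FreeMonoid.ofList s) =
      if t <+: s then f.coeff (FreeMonoid.ofList (s.drop t.length)) else 0 := by
  classical
  by_cases hp : t <+: s
  · obtain ⟨u, rfl⟩ := hp
    rw [if_pos (List.prefix_append t u)]
    have H : ∀ a : FreeMonoid ℕ, FreeMonoid.ofList t * a = FreeMonoid.ofList (t ++ u) ↔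
        a = FreeMonoid.ofList u := by
      intro a
      constructor
      · intro hh
        have : t ++ FreeMonoid.toList a = t ++ u := hh
        have := List.append_cancel_left this
        exact congrArg FreeMonoid.ofList this
      · rintro rfl; rfl
    have := MonoidAlgebra.coeff_single_mul_eq_mul_coeff (x := f) (r := (1:K))
      (m := FreeMonoid.ofList t) (m₁ := FreeMonoid.ofList (t ++ u)) (FreeMonoid.ofList u)
      (fun a _ => H a)
    rw [List.drop_left]
    simpa [mon] using this
  · rw [if_neg hp]
    show (MonoidAlgebra.single (FreeMonoid.ofList t) (1:K) * f).coeff (FreeMonoid.ofList s) = 0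
    apply MonoidAlgebra.coeff_single_mul_of_forall_mul_ne
    intro a hc
    apply hp
    exact ⟨FreeMonoid.toList a, congrArg FreeMonoid.toList hc⟩

lemma D_one {D : FA K →ₗ[K] FA K} (hD : IsDer K D) : D 1 = 0 := by
  have := hD.1 1 1
  simp only [one_mul, mul_one] at this
  have h2 : D 1 = D 1 + D 1 := this
  exact left_eq_add.mp h2

lemma mon_cons (a : ℕ) (l : List ℕ) : mon K (a :: l) = xg K a * mon K l := by
  rw [xg, mon_mul_mon]; rfl

lemma D_mon {D : FA K →ₗ[K] FA K} (hD : IsDer K D) :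
    ∀ l : List ℕ, D (mon K l) = ∑ q ∈ Finset.range l.length, mon K (lincr l q)
  | [] => by
      have : mon K ([] : List ℕ) = 1 := by
        rw [mon, MonoidAlgebra.one_def]; rfl
      rw [this, D_one hD]; simp
  | a :: l => by
      rw [mon_cons, hD.1, hD.2, D_mon hD l, ← mon_cons, Finset.mul_sum]
      have h1 : ∀ q, xg K a * mon K (lincr l q) = mon K (lincr (a :: l) (q + 1)) := by
        intro q; rw [← mon_cons]; rfl
      have h2 : mon K ((a+1) :: l) = mon K (lincr (a :: l) 0) := rfl
      rw [h2]
      rw [show (a :: l).length = l.length + 1 from rfl, Finset.sum_range_succ']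
      rw [add_comm]
      congr 1
      exact Finset.sum_congr rfl fun q _ => h1 q

lemma D_apply {D : FA K →ₗ[K] FA K} (hD : IsDer K D) (f : FA K) (t : List ℕ) :
    (D f).coeff (FreeMonoid.ofList t) = ∑ q ∈ Finset.range t.length,
      (if 0 < t.getD q 0 then f.coeff (FreeMonoid.ofList (ldecr t q)) else 0) := by
  induction f using MonoidAlgebra.induction_linear with
  | zero => simp
  | add f g hf hg =>
      rw [map_add, MonoidAlgebra.coeff_add, Finsupp.add_apply, hf, hg, ← Finset.sum_add_distrib]
      refine Finset.sum_congr rfl fun q _ => ?_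
      split <;> simp
  | single a b =>
      classical
      set l := FreeMonoid.toList a with hl
      have ha : a = FreeMonoid.ofList l := rfl
      have hs : (MonoidAlgebra.single a b : FA K) = b • mon K l := by
        rw [ha, mon, MonoidAlgebra.smul_single', mul_one]
      rw [hs, map_smul, MonoidAlgebra.coeff_smul, Finsupp.smul_apply, D_mon hD l,
        MonoidAlgebra.coeff_sum, Finsupp.finset_sum_apply]
      have hterm : ∀ q, (mon K (lincr l q)).coeff (FreeMonoid.ofList t)
          = if lincr l q = t then (1:K) else 0 := by
        intro q
        rw [mon, MonoidAlgebra.coeff_single, Finsupp.single_apply]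
        simp only [ofList_eq_iff]
      have hterm2 : ∀ u : List ℕ, (b • mon K l).coeff (FreeMonoid.ofList u)
          = if l = u then b else 0 := by
        intro u
        rw [MonoidAlgebra.coeff_smul, Finsupp.smul_apply, mon, MonoidAlgebra.coeff_single,
          Finsupp.single_apply]
        simp only [ofList_eq_iff]
        split <;> simp
      simp only [hterm, hterm2]
      by_cases hlen : l.length = t.length
      · rw [hlen, Finset.smul_sum]
        refine Finset.sum_congr rfl fun q hq => ?_
        have hq' : q < t.length := Finset.mem_range.mp hq
        have hmain := lincr_eq_iff l t q hlen hq'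
        by_cases hi : lincr l q = t
        · obtain ⟨h1, h2⟩ := hmain.mp hi
          rw [if_pos hi, if_pos h1, if_pos h2.symm, smul_eq_mul, mul_one]
        · rw [if_neg hi, smul_eq_mul, mul_zero]
          have hni : ¬(0 < t.getD q 0 ∧ ldecr t q = l) := fun hc => hi (hmain.mpr hc)
          split_ifs with c1 c2
          · exact absurd ⟨c1, c2.symm⟩ hni
          · rfl
          · rfl
      · have L : ∀ q ∈ Finset.range l.length, (if lincr l q = t then (1:K) else 0) = 0 := by
          intro q _
          rw [if_neg]
          intro hc
          exact hlen (by rw [← lincr_length l q, hc])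
        have R : ∀ q ∈ Finset.range t.length,
            (if 0 < t.getD q 0 then (if l = ldecr t q then b else 0) else 0) = 0 := by
          intro q _
          have hne : ¬(l = ldecr t q) := by
            intro hc
            exact hlen (by rw [hc, ldecr_length])
          simp [hne]
        rw [Finset.sum_congr rfl L, Finset.sum_congr rfl R]
        simp
end AuxAlg
section AuxCoef

variable {K : Type} [Field K]

lemma fa_one_apply (s : List ℕ) :
    (1 : FA K).coeff (FreeMonoid.ofList s) = if s = [] then 1 else 0 := by
  classical
  rw [MonoidAlgebra.one_def, MonoidAlgebra.coeff_single, Finsupp.single_apply]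
  have hiff : ((1 : FreeMonoid ℕ) = FreeMonoid.ofList s) ↔ s = [] := by
    rw [show (1 : FreeMonoid ℕ) = FreeMonoid.ofList [] from rfl, ofList_eq_iff, eq_comm]
  simp [hiff]

lemma gcount_cons_zero (t : List ℕ) : gcount 0 (0 :: t) = gcount 1 t := by
  simp [gcount]

lemma gcount_head_pos {a : ℕ} (ha : 0 < a) (t : List ℕ) : gcount 0 (a :: t) = 0 := by
  simp [gcount, Nat.choose_eq_zero_of_lt ha]

lemma key_sum (n jj : ℕ) (t : List ℕ) (hL : t.length = n) (hS : t.sum + jj = n + 1) :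
    (∑ q ∈ Finset.range t.length, if 0 < t.getD q 0 then
      (if (ldecr t q).length = n ∧ (ldecr t q).sum + jj = n
        then ((gcount 0 (ldecr t q) : ℕ) : K) else 0) else 0)
    = (gcount 1 t : K) - gcount 0 t := by
  have h1 : ∀ q ∈ Finset.range t.length, (if 0 < t.getD q 0 then
      (if (ldecr t q).length = n ∧ (ldecr t q).sum + jj = n
        then ((gcount 0 (ldecr t q) : ℕ) : K) else 0) else 0)
      = if 0 < t.getD q 0 then ((gcount 0 (ldecr t q) : ℕ) : K) else 0 := by
    intro q hq
    by_cases h0 : 0 < t.getD q 0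
    · rw [if_pos h0, if_pos h0, if_pos]
      refine ⟨by rw [ldecr_length]; exact hL, ?_⟩
      have := ldecr_sum t q (Finset.mem_range.mp hq) h0
      omega
    · rw [if_neg h0, if_neg h0]
  rw [Finset.sum_congr rfl h1]
  have h2 := gcount_succ t 0
  rw [zero_add] at h2
  have h3 : ((gcount 1 t : ℕ) : K) = (gcount 0 t : K)
      + ∑ q ∈ Finset.range t.length,
        (if 0 < t.getD q 0 then ((gcount 0 (ldecr t q) : ℕ) : K) else 0) := by
    rw [h2]
    push_cast [apply_ite (Nat.cast : ℕ → K)]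
    ring
  rw [h3]
  ring

lemma key_sum_zero (n jj : ℕ) (t : List ℕ) (h : ¬(t.length = n ∧ t.sum + jj = n + 1)) :
    (∑ q ∈ Finset.range t.length, if 0 < t.getD q 0 then
      (if (ldecr t q).length = n ∧ (ldecr t q).sum + jj = n
        then ((gcount 0 (ldecr t q) : ℕ) : K) else 0) else 0) = 0 := by
  apply Finset.sum_eq_zero
  intro q hq
  by_cases h0 : 0 < t.getD q 0
  · rw [if_pos h0, if_neg]
    rintro ⟨hl, hsum⟩
    rw [ldecr_length] at hl
    have := ldecr_sum t q (Finset.mem_range.mp hq) h0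
    exact h ⟨hl, by omega⟩
  · rw [if_neg h0]

lemma acoef_apply {D : FA K →ₗ[K] FA K} (hD : IsDer K D) :
    ∀ (n j : ℕ) (s : List ℕ), (acoef K D n j).coeff (FreeMonoid.ofList s)
      = if s.length = n ∧ s.sum + j = n then ((gcount 0 s : ℕ) : K) else 0 := by
  intro n
  induction n with
  | zero =>
    intro j s
    match j with
    | 0 =>
      show (acoef K D 0 0).coeff (FreeMonoid.ofList s) = _
      rw [show acoef K D 0 0 = 1 from rfl, fa_one_apply]
      rcases s with _ | ⟨a, t⟩
      · simp [gcount]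
      · simp
    | j + 1 =>
      rw [show acoef K D 0 (j+1) = 0 from rfl]
      rw [if_neg (by rintro ⟨h1, h2⟩; omega)]
      simp
  | succ n IH =>
    intro j s
    rcases j with _ | j
    · rw [show acoef K D (n+1) 0 = xg K 0 * D (acoef K D n 0) from rfl,
        show xg K 0 = mon K [0] from rfl, mon_mul_apply]
      rcases s with _ | ⟨a, t⟩
      · rw [if_neg (by rintro ⟨u, hu⟩; simp at hu)]
        rw [if_neg (by rintro ⟨h1, h2⟩; simp at h1)]
      · by_cases ha : a = 0
        · subst ha
          rw [if_pos ⟨t, rfl⟩]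
          have hdrop : (0 :: t).drop ([0] : List ℕ).length = t := rfl
          rw [hdrop, D_apply hD (acoef K D n 0) t]
          simp only [IH]
          by_cases hc : t.length = n ∧ t.sum = n + 1
          · rw [show (∑ q ∈ Finset.range t.length, if 0 < t.getD q 0 then
                (if (ldecr t q).length = n ∧ (ldecr t q).sum + 0 = n
                  then ((gcount 0 (ldecr t q) : ℕ) : K) else 0) else 0)
                = (gcount 1 t : K) - gcount 0 t from
                key_sum n 0 t hc.1 (by omega)]
            rw [if_pos ⟨by simp [hc.1], by simp only [List.sum_cons]; omega⟩]
            rw [gcount_cons_zero, gcount_zero t 0 (by omega)]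
            simp
          · rw [show (∑ q ∈ Finset.range t.length, if 0 < t.getD q 0 then
                (if (ldecr t q).length = n ∧ (ldecr t q).sum + 0 = n
                  then ((gcount 0 (ldecr t q) : ℕ) : K) else 0) else 0) = 0 from
                key_sum_zero n 0 t (by intro hx; exact hc ⟨hx.1, by omega⟩)]
            rw [if_neg]
            rintro ⟨h1, h2⟩
            simp only [List.length_cons, List.sum_cons] at h1 h2
            exact hc ⟨by omega, by omega⟩
        · rw [if_neg (by rintro ⟨u, hu⟩; simp at hu; exact ha hu.1.symm)]
          split_ifs with hcond
          · rw [gcount_head_pos (by omega) t]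
            simp
          · rfl
    · rw [show acoef K D (n+1) (j+1)
          = xg K 0 * (acoef K D n j + D (acoef K D n (j+1))) from rfl,
        show xg K 0 = mon K [0] from rfl, mon_mul_apply]
      rcases s with _ | ⟨a, t⟩
      · rw [if_neg (by rintro ⟨u, hu⟩; simp at hu)]
        rw [if_neg (by rintro ⟨h1, h2⟩; simp at h1)]
      · by_cases ha : a = 0
        · subst ha
          rw [if_pos ⟨t, rfl⟩]
          have hdrop : (0 :: t).drop ([0] : List ℕ).length = t := rfl
          rw [hdrop, MonoidAlgebra.coeff_add, Finsupp.add_apply, D_apply hD (acoef K D n (j+1)) t]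
          simp only [IH]
          by_cases hc : t.length = n ∧ t.sum + j = n
          · rw [show (∑ q ∈ Finset.range t.length, if 0 < t.getD q 0 then
                (if (ldecr t q).length = n ∧ (ldecr t q).sum + (j+1) = n
                  then ((gcount 0 (ldecr t q) : ℕ) : K) else 0) else 0)
                = (gcount 1 t : K) - gcount 0 t from
                key_sum n (j+1) t hc.1 (by omega)]
            rw [if_pos hc]
            rw [if_pos ⟨by simp [hc.1], by simp only [List.sum_cons]; omega⟩]
            rw [gcount_cons_zero]
            ring
          · rw [show (∑ q ∈ Finset.range t.length, if 0 < t.getD q 0 then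
                (if (ldecr t q).length = n ∧ (ldecr t q).sum + (j+1) = n
                  then ((gcount 0 (ldecr t q) : ℕ) : K) else 0) else 0) = 0 from
                key_sum_zero n (j+1) t (by intro hx; exact hc ⟨hx.1, by omega⟩)]
            rw [if_neg hc]
            rw [if_neg]
            · simp
            · rintro ⟨h1, h2⟩
              simp only [List.length_cons, List.sum_cons] at h1 h2
              exact hc ⟨by omega, by omega⟩
        · rw [if_neg (by rintro ⟨u, hu⟩; simp at hu; exact ha hu.1.symm)]
          split_ifs with hcond
          · rw [gcount_head_pos (by omega) t]
            simp
          · rfl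

end AuxCoef
section AuxB1

variable {K : Type} [Field K]

lemma coeff_Bk_one_zero (s : List ℕ)
    (Hpair : ∀ r, 100 * r + 99 ≤ s.length →
      (s[100*r]? = some 0 ∧ ∀ e : ℕ, s[100*r+2]? = some e → 0 < e) ∨
      (s[100*r+2]? = some 0 ∧ ∀ e : ℕ, s[100*r]? = some e → 0 < e)) :
    ∀ x ∈ Bk K 1, x.coeff (FreeMonoid.ofList s) = 0 := by
  intro x hx
  unfold Bk at hx
  refine Submodule.span_induction ?_ ?_ ?_ ?_ hx
  · rintro y ⟨l, z, v, ⟨m', hm'⟩, hz, rfl⟩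
    have hlen : l.length = 100 * m' := by
      rw [hm']; norm_num; ring
    have hkey : ∀ w : List ℕ, w.length = 99 → (l ++ w) <+: s →
        (s[100*m']? = w[0]? ∧ s[100*m'+2]? = w[2]? ∧ 100*m' + 99 ≤ s.length) := by
      rintro w hw ⟨u, hu⟩
      have h1 : ∀ c, c < 99 → s[100*m' + c]? = w[c]? := by
        intro c hc
        rw [← hu, List.append_assoc,
          List.getElem?_append_right (by omega : l.length ≤ 100*m' + c)]
        have h2 : 100*m' + c - l.length = c := by omega
        rw [h2, List.getElem?_append_left (by omega)]
      have hL : s.length = l.length + (w.length + u.length) := by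
        rw [← hu, List.append_assoc, List.length_append, List.length_append]
      constructor
      · have := h1 0 (by omega); simpa using this
      · exact ⟨h1 2 (by omega), by omega⟩
    rcases hz with ⟨κ, w, p, q, hpq, hq1, hwlen, hweq, rfl⟩ |
        ⟨κ, w₁, w₂, p, q, e₁, e₂, hpq, hq1, he, he2, hl1, hl2, h11, h12, h21, h22, _, rfl⟩
    · -- type 1
      have hp0 : p = 0 := by omega
      have hq1' : q = 1 := by omega
      subst hp0 hq1'
      norm_num at hweq hwlen
      have hre : mon K l * (κ • mon K w) * v = κ • (mon K (l ++ w) * v) := by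
        rw [mul_smul_comm, smul_mul_assoc, mon_mul_mon]
      rw [hre, MonoidAlgebra.coeff_smul, Finsupp.smul_apply, mon_mul_apply]
      split_ifs with hpre
      · exfalso
        obtain ⟨hs0, hs2, hsl⟩ := hkey w hwlen hpre
        rcases Hpair m' hsl with ⟨ha, hb⟩ | ⟨ha, hb⟩
        · have : s[100*m'+2]? = some 0 := by rw [hs2, ← hweq, ← hs0, ha]
          exact absurd (hb 0 this) (lt_irrefl 0)
        · have : s[100*m']? = some 0 := by rw [hs0, hweq, ← hs2, ha]
          exact absurd (hb 0 this) (lt_irrefl 0)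
      · simp
    · -- type 2
      have hp0 : p = 0 := by omega
      have hq1' : q = 1 := by omega
      subst hp0 hq1'
      norm_num at h11 h12 h21 h22 hl1 hl2
      have hre : mon K l * (κ • (mon K w₁ + mon K w₂)) * v
          = κ • (mon K (l ++ w₁) * v + mon K (l ++ w₂) * v) := by
        rw [mul_smul_comm, smul_mul_assoc, mul_add, add_mul, mon_mul_mon, mon_mul_mon]
      rw [hre, MonoidAlgebra.coeff_smul, Finsupp.smul_apply, MonoidAlgebra.coeff_add,
        Finsupp.add_apply, mon_mul_apply, mon_mul_apply]
      have z1 : (if (l ++ w₁) <+: s then v.coeff (FreeMonoid.ofList (s.drop (l ++ w₁).length)) else 0)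
          = 0 := by
        split_ifs with hpre
        · exfalso
          obtain ⟨hs0, hs2, hsl⟩ := hkey w₁ hl1 hpre
          rcases Hpair m' hsl with ⟨ha, _⟩ | ⟨ha, _⟩
          · rw [hs0, h11] at ha
            simp at ha; omega
          · rw [hs2, h12] at ha
            simp at ha; omega
        · rfl
      have z2 : (if (l ++ w₂) <+: s then v.coeff (FreeMonoid.ofList (s.drop (l ++ w₂).length)) else 0)
          = 0 := by
        split_ifs with hpre
        · exfalso
          obtain ⟨hs0, hs2, hsl⟩ := hkey w₂ hl2 hpre
          rcases Hpair m' hsl with ⟨ha, _⟩ | ⟨ha, _⟩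
          · rw [hs0, h21] at ha
            simp at ha; omega
          · rw [hs2, h22] at ha
            simp at ha; omega
        · rfl
      rw [z1, z2]
      simp
  · simp
  · intro a b _ _ ha hb
    rw [MonoidAlgebra.coeff_add, Finsupp.add_apply, ha, hb, add_zero]
  · intro c a _ ha
    rw [MonoidAlgebra.coeff_smul, Finsupp.smul_apply, ha, smul_zero]

end AuxB1
section AuxS0

/-- A full block of length 100: `amt` at (0-indexed) offset `o`, zeros elsewhere. -/
def blkl (o a : ℕ) : List ℕ := List.replicate o 0 ++ a :: List.replicate (99 - o) 0

/-- The final (short) block of length 99. -/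
def sblkl (o a : ℕ) : List ℕ := List.replicate o 0 ++ a :: List.replicate (98 - o) 0

/-- `k` consecutive full blocks starting at block index `j`. -/
def FF (off : ℕ → ℕ) (amt : ℕ) : ℕ → ℕ → List ℕ
  | _, 0 => []
  | j, k + 1 => blkl (off j) amt ++ FF off amt (j + 1) k

/-- The witness monomial: `h - 1` full blocks and one short final block. -/
def sfin (off : ℕ → ℕ) (amt h : ℕ) : List ℕ :=
  FF off amt 0 (h - 1) ++ sblkl (off (h - 1)) amt

variable {off : ℕ → ℕ} {amt : ℕ}

lemma blkl_length {o : ℕ} (ho : o ≤ 99) (a : ℕ) : (blkl o a).length = 100 := by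
  simp [blkl]; omega

lemma sblkl_length {o : ℕ} (ho : o ≤ 98) (a : ℕ) : (sblkl o a).length = 99 := by
  simp [sblkl]; omega

lemma blkl_sum (o a : ℕ) : (blkl o a).sum = a := by simp [blkl]

lemma sblkl_sum (o a : ℕ) : (sblkl o a).sum = a := by simp [sblkl]

lemma FF_length (hof : ∀ r, off r ≤ 2) : ∀ (k j : ℕ), (FF off amt j k).length = 100 * k
  | 0, j => rfl
  | k+1, j => by
      show (blkl (off j) amt ++ FF off amt (j+1) k).length = _
      rw [List.length_append, blkl_length (by have := hof j; omega) amt,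
        FF_length hof k (j+1)]
      ring

lemma FF_sum : ∀ (k j : ℕ), (FF off amt j k).sum = k * amt
  | 0, j => by simp [FF]
  | k+1, j => by
      show (blkl (off j) amt ++ FF off amt (j+1) k).sum = _
      rw [List.sum_append, blkl_sum, FF_sum k (j+1)]
      ring

lemma sfin_length (hof : ∀ r, off r ≤ 2) {h : ℕ} (hh : 0 < h) :
    (sfin off amt h).length = 100 * h - 1 := by
  unfold sfin
  rw [List.length_append, FF_length hof, sblkl_length (by have := hof (h-1); omega) amt]
  omega

lemma sfin_sum {h : ℕ} (hh : 0 < h) : (sfin off amt h).sum = h * amt := by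
  unfold sfin
  rw [List.sum_append, FF_sum, sblkl_sum]
  have : h - 1 + 1 = h := by omega
  calc (h-1) * amt + amt = (h - 1 + 1) * amt := by ring
  _ = h * amt := by rw [this]

lemma blkl_get {o c : ℕ} (ho : o ≤ 99) (hc : c < 100) (a : ℕ) :
    (blkl o a)[c]? = some (if o = c then a else 0) := by
  unfold blkl
  rcases lt_trichotomy c o with hlt | rfl | hgt
  · rw [List.getElem?_append_left (by simpa using hlt)]
    rw [List.getElem?_replicate, if_pos hlt, if_neg (by omega)]
  · rw [List.getElem?_append_right (by simp)]
    simp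
  · rw [List.getElem?_append_right (by simp; omega)]
    have h2 : c - (List.replicate o (0:ℕ)).length = (c - o - 1) + 1 := by simp; omega
    rw [h2, List.getElem?_cons_succ, List.getElem?_replicate,
      if_pos (by omega), if_neg (by omega)]

lemma sblkl_get {o c : ℕ} (ho : o ≤ 98) (hc : c < 99) (a : ℕ) :
    (sblkl o a)[c]? = some (if o = c then a else 0) := by
  unfold sblkl
  rcases lt_trichotomy c o with hlt | rfl | hgt
  · rw [List.getElem?_append_left (by simpa using hlt)]
    rw [List.getElem?_replicate, if_pos hlt, if_neg (by omega)]
  · rw [List.getElem?_append_right (by simp)]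
    simp
  · rw [List.getElem?_append_right (by simp; omega)]
    have h2 : c - (List.replicate o (0:ℕ)).length = (c - o - 1) + 1 := by simp; omega
    rw [h2, List.getElem?_cons_succ, List.getElem?_replicate,
      if_pos (by omega), if_neg (by omega)]

lemma FF_get (hof : ∀ r, off r ≤ 2) : ∀ (k j r c : ℕ), r < k → c < 100 →
    (FF off amt j k)[100 * r + c]? = some (if off (j + r) = c then amt else 0)
  | k+1, j, 0, c, hr, hc => by
      show (blkl (off j) amt ++ FF off amt (j+1) k)[100 * 0 + c]? = _
      rw [List.getElem?_append_left (by rw [blkl_length (by have := hof j; omega) amt]; omega)]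
      have := blkl_get (o := off j) (by have := hof j; omega) hc amt
      simpa using this
  | k+1, j, r+1, c, hr, hc => by
      show (blkl (off j) amt ++ FF off amt (j+1) k)[100 * (r+1) + c]? = _
      rw [List.getElem?_append_right (by rw [blkl_length (by have := hof j; omega) amt]; omega)]
      have h2 : 100 * (r+1) + c - (blkl (off j) amt).length = 100 * r + c := by
        rw [blkl_length (by have := hof j; omega) amt]; omega
      rw [h2, FF_get hof k (j+1) r c (by omega) hc]
      rw [show j + 1 + r = j + (r + 1) from by omega]

lemma sfin_get (hof : ∀ r, off r ≤ 2) {h r c : ℕ} (hh : 0 < h) (hr : r < h) (hc : c < 99) :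
    (sfin off amt h)[100 * r + c]? = some (if off r = c then amt else 0) := by
  unfold sfin
  rcases lt_or_ge r (h-1) with h1 | h1
  · rw [List.getElem?_append_left (by rw [FF_length hof]; omega)]
    have := FF_get (amt := amt) hof (h-1) 0 r c h1 (by omega)
    simpa using this
  · have hrh : r = h - 1 := by omega
    subst hrh
    rw [List.getElem?_append_right (by rw [FF_length hof]; omega)]
    have h2 : 100 * (h-1) + c - (FF off amt 0 (h-1)).length = c := by
      rw [FF_length hof]; omega
    rw [h2, sblkl_get (by have := hof (h-1); omega) hc amt]

lemma gcount_replicate : ∀ (k d : ℕ) (t : List ℕ),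
    gcount d (List.replicate k 0 ++ t) = gcount (d + k) t
  | 0, d, t => by simp
  | k+1, d, t => by
      show gcount d (0 :: (List.replicate k 0 ++ t)) = _
      rw [show gcount d (0 :: (List.replicate k 0 ++ t))
        = Nat.choose d 0 * gcount (d + 1 - 0) (List.replicate k 0 ++ t) from rfl]
      rw [Nat.choose_zero_right, one_mul, Nat.sub_zero, gcount_replicate k (d+1) t]
      rw [show d + 1 + k = d + (k + 1) from by omega]

lemma gcount_blkl {o a d : ℕ} (ho : o ≤ 99) (ha : a ≤ d + o) (rest : List ℕ) :
    gcount d (blkl o a ++ rest) = Nat.choose (d + o) a * gcount (d + 100 - a) rest := by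
  unfold blkl
  rw [List.append_assoc, List.cons_append, gcount_replicate]
  rw [show gcount (d + o) (a :: (List.replicate (99 - o) 0 ++ rest))
    = Nat.choose (d + o) a * gcount (d + o + 1 - a) (List.replicate (99 - o) 0 ++ rest)
    from rfl]
  rw [gcount_replicate]
  rw [show d + o + 1 - a + (99 - o) = d + 100 - a from by omega]

lemma gcount_sblkl {o a d : ℕ} (ho : o ≤ 98) (ha : a ≤ d + o) :
    gcount d (sblkl o a) = Nat.choose (d + o) a := by
  unfold sblkl
  rw [gcount_replicate]
  rw [show gcount (d + o) (a :: List.replicate (98 - o) 0)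
    = Nat.choose (d + o) a * gcount (d + o + 1 - a) (List.replicate (98 - o) 0) from rfl]
  have hone : gcount (d + o + 1 - a) (List.replicate (98 - o) 0) = 1 := by
    rw [← List.append_nil (List.replicate (98 - o) (0:ℕ)), gcount_replicate]
    rfl
  rw [hone, mul_one]

lemma gcount_FF (ha2 : amt ≤ 2) (hof : ∀ r, off r ≤ 2)
    (hok : ∀ j, amt ≤ j * (100 - amt) + off j) :
    ∀ (k j : ℕ) (rest : List ℕ), gcount (j * (100 - amt)) (FF off amt j k ++ rest)
      = (∏ i ∈ Finset.range k, Nat.choose ((j + i) * (100 - amt) + off (j + i)) amt)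
        * gcount ((j + k) * (100 - amt)) rest
  | 0, j, rest => by simp [FF]
  | k+1, j, rest => by
      show gcount _ ((blkl (off j) amt ++ FF off amt (j+1) k) ++ rest) = _
      rw [List.append_assoc]
      rw [gcount_blkl (by have := hof j; omega) (hok j) _]
      rw [show j * (100 - amt) + 100 - amt = (j+1) * (100 - amt) from by
        have h2 : amt ≤ 2 := ha2
        have : (j+1) * (100 - amt) = j * (100 - amt) + (100 - amt) := by ring
        omega]
      rw [gcount_FF ha2 hof hok k (j+1) rest]
      rw [Finset.prod_range_succ']
      have hprod : ∏ i ∈ Finset.range k,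
            Nat.choose ((j + 1 + i) * (100 - amt) + off (j + 1 + i)) amt
          = ∏ i ∈ Finset.range k,
            Nat.choose ((j + (i + 1)) * (100 - amt) + off (j + (i + 1))) amt :=
        Finset.prod_congr rfl fun i _ => by rw [show j + 1 + i = j + (i + 1) from by omega]
      rw [hprod, show j + 0 = j from rfl, show j + 1 + k = j + (k + 1) from by omega]
      ring

lemma gcount_sfin (ha2 : amt ≤ 2) (hof : ∀ r, off r ≤ 2)
    (hok : ∀ j, amt ≤ j * (100 - amt) + off j) {h : ℕ} (hh : 0 < h) :
    gcount 0 (sfin off amt h)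
      = ∏ r ∈ Finset.range h, Nat.choose (r * (100 - amt) + off r) amt := by
  unfold sfin
  have h0 := gcount_FF ha2 hof hok (h-1) 0 (sblkl (off (h-1)) amt)
  simp only [Nat.zero_mul, Nat.zero_add] at h0
  rw [h0, gcount_sblkl (by have := hof (h-1); omega) (hok (h-1))]
  rw [show h = (h - 1) + 1 from by omega, Finset.prod_range_succ]
  rw [show (h - 1) + 1 - 1 = h - 1 from by omega]

end AuxS0
section MainAux

variable {K : Type} [Field K]

lemma exists_good_j (D : FA K →ₗ[K] FA K) (hD : IsDer K D)
    (h m : ℕ) (hh : 0 < h) (hm : m + 1 = 100 * h)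
    (off : ℕ → ℕ) (amt : ℕ) (ha1 : 1 ≤ amt) (ha2 : amt ≤ 2)
    (hof01 : ∀ r, off r = 0 ∨ off r = 2) (hoff0 : off 0 = 2)
    (hNZ : ((∏ r ∈ Finset.range h, Nat.choose (r * (100 - amt) + off r) amt : ℕ) : K) ≠ 0) :
    ∃ j₀, j₀ ≤ m ∧ 3 * (m + 1) < 4 * j₀ ∧ acoef K D m j₀ ∉ Bk K 1 := by
  have hof : ∀ r, off r ≤ 2 := fun r => by rcases hof01 r with h' | h' <;> omega
  have hok : ∀ j, amt ≤ j * (100 - amt) + off j := by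
    intro j
    rcases Nat.eq_zero_or_pos j with rfl | hj
    · rw [hoff0]; simpa using ha2
    · have h98 : 98 ≤ 100 - amt := by omega
      have := Nat.mul_le_mul hj h98
      omega
  set s₀ := sfin off amt h with hs₀
  have hlen : s₀.length = 100 * h - 1 := sfin_length hof hh
  have hsum : s₀.sum = h * amt := sfin_sum hh
  have hmul : h * amt ≤ 2 * h := by
    calc h * amt ≤ h * 2 := Nat.mul_le_mul_left h ha2
    _ = 2 * h := by ring
  refine ⟨m - h * amt, by omega, by omega, ?_⟩
  intro hmem
  have Hpair : ∀ r, 100 * r + 99 ≤ s₀.length →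
      (s₀[100*r]? = some 0 ∧ ∀ e : ℕ, s₀[100*r+2]? = some e → 0 < e) ∨
      (s₀[100*r+2]? = some 0 ∧ ∀ e : ℕ, s₀[100*r]? = some e → 0 < e) := by
    intro r hr
    have hrh : r < h := by omega
    have h0 := sfin_get (amt := amt) hof hh hrh (c := 0) (by omega)
    have h2 := sfin_get (amt := amt) hof hh hrh (c := 2) (by omega)
    rw [show 100 * r + 0 = 100 * r from by omega] at h0
    rcases hof01 r with hc | hc
    · right
      constructor
      · rw [h2]; simp [hc]
      · intro e he
        rw [h0] at he
        simp [hc] at he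
        omega
    · left
      constructor
      · rw [h0]; simp [hc]
      · intro e he
        rw [h2] at he
        simp [hc] at he
        omega
  have hcoeff := coeff_Bk_one_zero s₀ Hpair (acoef K D m (m - h*amt)) hmem
  have hval := acoef_apply hD m (m - h*amt) s₀
  rw [if_pos ⟨by omega, by omega⟩] at hval
  rw [gcount_sfin ha2 hof hok hh] at hval
  exact hNZ (by rw [← hval, hcoeff])

end MainAux
/-- Lemma 7: if `m + 1 = 100·h` and `(x_0X)^m = Σ_j a_j X^j` with `a_j ∈ A(100·h − 1)`,
then there is `i > (3/4)(m+1)` with `a_i ∉ B_1` and `a_j ∈ B_1` for all `i < j ≤ m`. -/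
theorem x0X_coeff_not_in_B1 (K : Type) [Field K] (D : FA K →ₗ[K] FA K) (hD : IsDer K D)
    (h m : ℕ) (hh : 0 < h) (hm : m + 1 = 100 * h)
    (hA : ∀ j ≤ m, acoef K D m j ∈ Agr K (100 * h - 1)) :
    ∃ i ≤ m, 3 * (m + 1) < 4 * i ∧ acoef K D m i ∉ Bk K 1 ∧
      ∀ j, i < j → j ≤ m → acoef K D m j ∈ Bk K 1 := by
  classical
  have hchoice : ∃ (off : ℕ → ℕ) (amt : ℕ), 1 ≤ amt ∧ amt ≤ 2 ∧
      (∀ r, off r = 0 ∨ off r = 2) ∧ off 0 = 2 ∧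
      ((∏ r ∈ Finset.range h, Nat.choose (r * (100 - amt) + off r) amt : ℕ) : K) ≠ 0 := by
    by_cases hp2 : ringChar K = 2
    · refine ⟨fun r => if r % 2 = 0 then 2 else 0, 2, by norm_num, by norm_num,
        fun r => by dsimp only; split <;> simp, by norm_num, ?_⟩
      rw [Nat.cast_prod]
      apply Finset.prod_ne_zero_iff.mpr
      intro r _
      dsimp only
      rw [Ne, ringChar.spec K, hp2]
      have hv : ∃ u, r * (100 - 2) + (if r % 2 = 0 then 2 else 0) = 4 * u + 2 := by
        rcases Nat.even_or_odd r with ⟨t, rfl⟩ | ⟨t, rfl⟩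
        · refine ⟨49 * t, ?_⟩
          rw [if_pos (by omega)]
          omega
        · refine ⟨49 * t + 24, ?_⟩
          rw [if_neg (by omega)]
          omega
      obtain ⟨u, hu⟩ := hv
      rw [hu]
      have hch : Nat.choose (4*u+2) 2 = (2*u+1) * (4*u+1) := by
        rw [Nat.choose_two_right]
        rw [show (4*u+2) * ((4*u+2) - 1) = 2 * ((2*u+1)*(4*u+1)) from by
          rw [show (4*u+2) - 1 = 4*u+1 from by omega]; ring]
        exact Nat.mul_div_cancel_left _ (by norm_num)
      rw [hch]
      intro hdvd
      rcases (Nat.prime_two.dvd_mul).mp hdvd with h' | h' <;> omega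
    · refine ⟨fun r => if ringChar K ∣ 99 * r then 2 else 0, 1, le_refl 1, by norm_num,
        fun r => by dsimp only; split <;> simp, by simp, ?_⟩
      rw [Nat.cast_prod]
      apply Finset.prod_ne_zero_iff.mpr
      intro r _
      dsimp only
      rw [Ne, ringChar.spec K, Nat.choose_one_right]
      by_cases hd : ringChar K ∣ 99 * r
      · rw [if_pos hd]
        intro hdd
        have hdd' : ringChar K ∣ 99 * r + 2 := by
          rwa [show r * (100 - 1) + 2 = 99 * r + 2 from by ring] at hdd
        have h2 : ringChar K ∣ 2 := by
          have := Nat.dvd_sub hdd' hd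
          simpa using this
        rcases CharP.char_is_prime_or_zero K (ringChar K) with hpr | h0
        · exact hp2 ((Nat.prime_dvd_prime_iff_eq hpr Nat.prime_two).mp h2)
        · rw [h0] at h2
          simp at h2
      · rw [if_neg hd]
        intro hdd
        exact hd (by rwa [show r * (100-1) + 0 = 99 * r from by ring] at hdd)
  obtain ⟨off, amt, ha1, ha2, hof01, hoff0, hNZ⟩ := hchoice
  obtain ⟨j₀, hj₀m, hj₀big, hj₀notin⟩ :=
    exists_good_j D hD h m hh hm off amt ha1 ha2 hof01 hoff0 hNZ
  refine ⟨Nat.findGreatest (fun j => acoef K D m j ∉ Bk K 1) m, Nat.findGreatest_le m, ?_,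
    Nat.findGreatest_spec (P := fun j => acoef K D m j ∉ Bk K 1) hj₀m hj₀notin, ?_⟩
  · have := Nat.le_findGreatest (P := fun j => acoef K D m j ∉ Bk K 1) hj₀m hj₀notin
    omega
  · intro j hij hjm
    by_contra hnot
    exact Nat.findGreatest_is_greatest (P := fun j => acoef K D m j ∉ Bk K 1) hij hjm hnot
end
end

section
/- The quotient algebra R = A/I is locally nilpotent: every finitely generated K-subalgebra of A/I is nilpotent. -/
noncomputable section

section Aux

variable (K : Type) [Field K]

lemma mon_mul (l1 l2 : List ℕ) : mon K l1 * mon K l2 = mon K (l1 ++ l2) := by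
  simp [mon, MonoidAlgebra.single_mul_single]

lemma mon_nil : mon K [] = 1 := by
  simp [mon]; rfl

/-- Monomials of length at least `n` in the letters `< k`. -/
def Mset (k n : ℕ) : Set (FA K) :=
  {a | ∃ l : List ℕ, n ≤ l.length ∧ (∀ i ∈ l, i < k) ∧ a = mon K l}

def Msub (k n : ℕ) : Submodule K (FA K) := Submodule.span K (Mset K k n)

lemma Msub_anti {k m n : ℕ} (h : m ≤ n) : Msub K k n ≤ Msub K k m := by
  apply Submodule.span_mono
  rintro a ⟨l, hl, hlt, rfl⟩
  exact ⟨l, h.trans hl, hlt, rfl⟩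

lemma Msub_mul {k m n : ℕ} {a b : FA K} (ha : a ∈ Msub K k m) (hb : b ∈ Msub K k n) :
    a * b ∈ Msub K k (m + n) := by
  have h1 : a * b ∈ Submodule.span K (Mset K k m) * Submodule.span K (Mset K k n) :=
    Submodule.mul_mem_mul ha hb
  rw [Submodule.span_mul_span] at h1
  refine Submodule.span_le.2 ?_ h1
  rintro x ⟨u, ⟨l1, hl1, hlt1, rfl⟩, v, ⟨l2, hl2, hlt2, rfl⟩, rfl⟩
  refine Submodule.subset_span ⟨l1 ++ l2, ?_, ?_, mon_mul K l1 l2⟩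
  · simpa using Nat.add_le_add hl1 hl2
  · intro i hi
    rcases List.mem_append.1 hi with h | h
    · exact hlt1 i h
    · exact hlt2 i h

lemma Msub_prod {k : ℕ} (l : List (FA K)) (h : ∀ b ∈ l, b ∈ Msub K k 1) :
    l.prod ∈ Msub K k l.length := by
  induction l with
  | nil =>
    simp only [List.prod_nil, List.length_nil]
    exact Submodule.subset_span ⟨[], by simp, by simp, (mon_nil K).symm⟩
  | cons a t ih =>
    simp only [List.prod_cons, List.length_cons]
    have := Msub_mul K (h a (by simp)) (ih (fun b hb => h b (List.mem_cons_of_mem _ hb)))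
    simpa [Nat.add_comm] using this

lemma foldr_max_bound {i : ℕ} {l : List ℕ} (h : i ∈ l) : i ≤ l.foldr max 0 := by
  induction l with
  | nil => simp at h
  | cons a t ih =>
    rcases List.mem_cons.1 h with rfl | h
    · exact le_max_left _ _
    · exact le_trans (ih h) (le_max_right _ _)

lemma apos_coeff_one {a : FA K} (ha : a ∈ Apos K) : a.coeff (1 : FreeMonoid ℕ) = 0 := by
  induction ha using Submodule.span_induction with
  | mem x hx =>
    obtain ⟨l, hl, rfl⟩ := hx
    have : FreeMonoid.ofList l ≠ 1 := by
      intro h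
      apply hl
      have := congrArg FreeMonoid.toList h
      simpa using this
    rw [mon, MonoidAlgebra.coeff_single]
    exact Finsupp.single_eq_of_ne this.symm
  | zero => rfl
  | add x y _ _ hx hy =>
    show (x + y).coeff (1 : FreeMonoid ℕ) = 0
    rw [MonoidAlgebra.coeff_add, Finsupp.add_apply, hx, hy, add_zero]
  | smul c x _ hx =>
    show (c • x).coeff (1 : FreeMonoid ℕ) = 0
    rw [MonoidAlgebra.coeff_smul, Finsupp.smul_apply, hx, smul_zero]

lemma mem_Msub_one {k : ℕ} {a : FA K} (ha : a ∈ Apos K)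
    (hsup : ∀ w ∈ a.coeff.support, ∀ i ∈ FreeMonoid.toList w, i < k) :
    a ∈ Msub K k 1 := by
  have hrep : a = ∑ w ∈ a.coeff.support, MonoidAlgebra.single w (a.coeff w) := by
    conv_lhs => rw [← MonoidAlgebra.sum_coeff_single a]
    rfl
  rw [hrep]
  apply Submodule.sum_mem
  intro w hw
  by_cases h1 : w = 1
  · subst h1
    rw [apos_coeff_one K ha]
    simp
  · have hmon : (a.coeff w) • mon K w.toList = (MonoidAlgebra.single w (a.coeff w) : FA K) := by
      simp [mon, MonoidAlgebra.smul_single', FreeMonoid.ofList_toList]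
    rw [← hmon]
    apply Submodule.smul_mem
    apply Submodule.subset_span
    refine ⟨w.toList, ?_, hsup w hw, by simp⟩
    have : w.toList ≠ [] := by
      intro h
      apply h1
      have := congrArg FreeMonoid.ofList h
      simpa using this
    exact Nat.one_le_iff_ne_zero.2 (by simpa [List.length_eq_zero_iff] using this)

lemma Msub_le_Ik (D : FA K →ₗ[K] FA K) (k : ℕ) :
    Msub K k (2 * 100 ^ (k ^ 2)) ≤ Ik K D k := by
  apply Submodule.span_le.2
  rintro a ⟨l, hl, hlt, rfl⟩
  set n := 2 * 100 ^ (k ^ 2) with hn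
  apply Submodule.subset_span
  refine ⟨mon K (l.take (l.length - n)), 1, mon K (l.drop (l.length - n)), ?_, ?_⟩
  · apply Set.mem_iUnion.2 ⟨0, ?_⟩
    refine ⟨l.drop (l.length - n), ?_, fun i hi => hlt i (List.mem_of_mem_drop hi), rfl⟩
    simp [Nat.sub_sub_self hl]
    exact hn
  · rw [mon_mul, mul_one, List.take_append_drop]

end Aux


/-- The quotient algebra `R = A/I` is locally nilpotent: for every finite subset `s` of the
non-unital free algebra `A` there is `N ≥ 1` such that every product of at least `N`
elements of the non-unital subalgebra generated by `s` lies in `I`; equivalently, every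
finitely generated subalgebra of `A/I` is nilpotent. -/
theorem quotient_locally_nilpotent (K : Type) [Field K] (D : FA K →ₗ[K] FA K)
    (hD : IsDer K D) (s : Finset (FA K)) (hs : (s : Set (FA K)) ⊆ Apos K) :
    ∃ N : ℕ, 0 < N ∧ ∀ l : List (FA K),
      (∀ b ∈ l, b ∈ NonUnitalAlgebra.adjoin K (s : Set (FA K))) →
      N ≤ l.length → l.prod ∈ Itot K D := by
  classical
  set k : ℕ := 1 + s.sup (fun a => a.coeff.support.sup (fun w => (FreeMonoid.toList w).foldr max 0))
    with hk
  have hk1 : 1 ≤ k := Nat.le_add_right 1 _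
  -- every element of s lies in Msub K k 1
  have hsM : ∀ a ∈ s, a ∈ Msub K k 1 := by
    intro a ha
    apply mem_Msub_one K (hs ha)
    intro w hw i hi
    have h1 : i ≤ (FreeMonoid.toList w).foldr max 0 := foldr_max_bound hi
    have h2 : (FreeMonoid.toList w).foldr max 0 ≤
        a.coeff.support.sup (fun w => (FreeMonoid.toList w).foldr max 0) :=
      Finset.le_sup hw
    have h3 : a.coeff.support.sup (fun w => (FreeMonoid.toList w).foldr max 0) ≤
        s.sup (fun a => a.coeff.support.sup (fun w => (FreeMonoid.toList w).foldr max 0)) :=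
      Finset.le_sup (f := fun a => a.coeff.support.sup (fun w => (FreeMonoid.toList w).foldr max 0)) ha
    omega
  -- hence the adjoined subalgebra lies in Msub K k 1
  have hadj : ∀ a ∈ NonUnitalAlgebra.adjoin K (s : Set (FA K)), a ∈ Msub K k 1 := by
    intro a ha
    induction ha using NonUnitalAlgebra.adjoin_induction with
    | mem x hx => exact hsM x hx
    | add x y _ _ hx hy => exact Submodule.add_mem _ hx hy
    | zero => exact Submodule.zero_mem _
    | mul x y _ _ hx hy => exact Msub_anti K (by omega) (Msub_mul K hx hy)
    | smul c x _ hx => exact Submodule.smul_mem _ c hx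
  refine ⟨2 * 100 ^ (k ^ 2), by positivity, ?_⟩
  intro l hl hlen
  have hp : l.prod ∈ Msub K k l.length := Msub_prod K l (fun b hb => hadj b (hl b hb))
  have hp2 : l.prod ∈ Msub K k (2 * 100 ^ (k ^ 2)) := Msub_anti K hlen hp
  have hIk : l.prod ∈ Ik K D k := Msub_le_Ik K D k hp2
  have hle : Ik K D k ≤ Itot K D := by
    have h1 : Ik K D k ≤ ⨆ _ : 1 ≤ k, Ik K D k := le_iSup (fun _ => Ik K D k) hk1
    exact h1.trans (le_iSup (fun j => ⨆ _ : 1 ≤ j, Ik K D j) k)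
  exact hle hIk
end
end
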